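/- If W ∈ ℝ^{n×n} has at most r distinct rows and A ∈ ℝ^{n×n} is arbitrary, then for any Z ∈ ℝ^{k×n}, there exists a minimizer U* of U ↦ ‖(UZ − A) ∘ W‖_F² such that U* has at most r·p distinct rows, where p is such that W ∘ A has at most r·p distinct rows. More precisely: if rows ℓ₁, ℓ₂ satisfy W_{ℓ₁,*} = W_{ℓ₂,*} and (W ∘ A)_{ℓ₁,*} = (W ∘ A)_{ℓ₂,*}, one can choose U* with (U*)_{ℓ₁,*} = (U*)_{ℓ₂,*}. -/

import Mathlib

open scoped Matrix

noncomputable def frobSq {n m : ℕ} (M : Matrix (Fin n) (Fin m) ℝ) : ℝ :=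
  ∑ i, ∑ j, (M i j) ^ 2

lemma row_min (n k : ℕ) (Z : Matrix (Fin k) (Fin n) ℝ) (w b : Fin n → ℝ) :
    ∃ u : Fin k → ℝ, ∀ v : Fin k → ℝ,
      ∑ j, ((∑ t, u t * Z t j) * w j - b j) ^ 2
        ≤ ∑ j, ((∑ t, v t * Z t j) * w j - b j) ^ 2 := by
  classical
  let T : (Fin k → ℝ) →ₗ[ℝ] EuclideanSpace ℝ (Fin n) :=
    { toFun := fun u => WithLp.toLp 2 (fun j => (∑ t, u t * Z t j) * w j)
      map_add' := by
        intro x y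
        ext j
        simp [add_mul, Finset.sum_add_distrib]
      map_smul' := by
        intro c x
        ext j
        simp [Finset.mul_sum, mul_assoc, mul_comm, mul_left_comm] }
  let K := LinearMap.range T
  let c : EuclideanSpace ℝ (Fin n) := WithLp.toLp 2 (fun j => b j)
  have hcomp : IsComplete ((K : Set (EuclideanSpace ℝ (Fin n)))) := by
    haveI : FiniteDimensional ℝ K := FiniteDimensional.finiteDimensional_submodule K
    exact K.complete_of_finiteDimensional
  have hproj : ∃ m ∈ K, ∀ y ∈ K, ‖c - m‖ ≤ ‖c - y‖ := by
    obtain ⟨m, hmK, hm⟩ := K.exists_norm_eq_iInf_of_complete_subspace hcomp c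
    refine ⟨m, hmK, fun y hy => ?_⟩
    rw [hm]
    exact ciInf_le ⟨0, fun r hr => by
      obtain ⟨x, rfl⟩ := hr; positivity⟩ (⟨y, hy⟩ : K)
  obtain ⟨m, hmK, hmin⟩ := hproj
  obtain ⟨u, hu⟩ := hmK
  refine ⟨u, fun v => ?_⟩
  have key : ‖c - T u‖ ≤ ‖c - T v‖ := by
    rw [hu]; exact hmin _ ⟨v, rfl⟩
  have sq_eq : ∀ x : Fin k → ℝ,
      ∑ j, ((∑ t, x t * Z t j) * w j - b j) ^ 2 = ‖c - T x‖ ^ 2 := by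
    intro x
    rw [EuclideanSpace.norm_eq, Real.sq_sqrt (by positivity)]
    apply Finset.sum_congr rfl
    intro j _
    have : (c - T x) j = b j - (∑ t, x t * Z t j) * w j := rfl
    rw [this]
    rw [Real.norm_eq_abs, sq_abs]
    ring
  rw [sq_eq u, sq_eq v]
  exact pow_le_pow_left₀ (norm_nonneg _) key 2

theorem stmt_5 (n k : ℕ) (A W : Matrix (Fin n) (Fin n) ℝ) (Z : Matrix (Fin k) (Fin n) ℝ) :
    ∃ Ustar : Matrix (Fin n) (Fin k) ℝ,
      (∀ U : Matrix (Fin n) (Fin k) ℝ,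
        frobSq (Matrix.hadamard (Ustar * Z - A) W)
          ≤ frobSq (Matrix.hadamard (U * Z - A) W)) ∧
      (∀ ℓ₁ ℓ₂ : Fin n, W ℓ₁ = W ℓ₂ →
        (fun j => W ℓ₁ j * A ℓ₁ j) = (fun j => W ℓ₂ j * A ℓ₂ j) →
        Ustar ℓ₁ = Ustar ℓ₂) := by
  classical
  -- minimizer depending only on (w, b)
  let F : (Fin n → ℝ) → (Fin n → ℝ) → (Fin k → ℝ) :=
    fun w b => (row_min n k Z w b).choose
  have hF : ∀ w b, ∀ v : Fin k → ℝ,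
      ∑ j, ((∑ t, F w b t * Z t j) * w j - b j) ^ 2
        ≤ ∑ j, ((∑ t, v t * Z t j) * w j - b j) ^ 2 :=
    fun w b => (row_min n k Z w b).choose_spec
  refine ⟨Matrix.of (fun i => F (W i) (fun j => W i j * A i j)), ?_, ?_⟩
  · intro U
    unfold frobSq
    apply Finset.sum_le_sum
    intro i _
    have h := hF (W i) (fun j => W i j * A i j) (U i)
    have e : ∀ (V : Matrix (Fin n) (Fin k) ℝ),
        ∑ j, (Matrix.hadamard (V * Z - A) W i j) ^ 2
          = ∑ j, ((∑ t, V i t * Z t j) * W i j - W i j * A i j) ^ 2 := by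
      intro V
      apply Finset.sum_congr rfl
      intro j _
      simp only [Matrix.hadamard_apply, Matrix.sub_apply, Matrix.mul_apply]
      ring
    rw [e, e]
    exact h
  · intro ℓ₁ ℓ₂ hW hWA
    show F (W ℓ₁) (fun j => W ℓ₁ j * A ℓ₁ j) = F (W ℓ₂) (fun j => W ℓ₂ j * A ℓ₂ j)
    rw [hW]
    have hb : (fun j => W ℓ₂ j * A ℓ₁ j) = (fun j => W ℓ₂ j * A ℓ₂ j) := by
      funext j
      rw [← congrFun hW j, congrFun hWA j, congrFun hW j]
    rw [hb]
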